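/- Let (X,d) be a geodesic metric space and suppose there is a number D>0 and for every pair of points x,y ∈ X a continuous path η(x,y):[0,1]→X with η(x,y)(0)=x and η(x,y)(1)=y such that: (1) if d(x,y) ≤ 1 then the diameter of η(x,y)([0,1]) is at most D; (2) for all 0 ≤ s ≤ t ≤ 1 the Hausdorff distance between η(x,y)([s,t]) and η(η(x,y)(s), η(x,y)(t))([0,1]) is at most D; (3) for all x,y,z ∈ X, the set η(x,y)([0,1]) is contained in the D-neighborhood of η(x,z)([0,1]) ∪ η(z,y)([0,1]). Then there is a constant κ₁>0 depending only on D such that for all x,y ∈ X and every geodesic c:[0,d(x,y)]→X with c(0)=x and c(d(x,y))=y, every point of η(x,y)([0,1]) lies within distance κ₁ of the image of c. -/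

import Mathlib

/-- `c` restricted to `[a,b]` is a geodesic (an isometric embedding of the interval). -/
def IsGeodesicOn {X : Type*} [MetricSpace X] (c : ℝ → X) (a b : ℝ) : Prop :=
  ∀ s ∈ Set.Icc a b, ∀ t ∈ Set.Icc a b, dist (c s) (c t) = |s - t|

/-- A geodesic metric space: any two points are joined by a geodesic. -/
def GeodesicSpace (X : Type*) [MetricSpace X] : Prop :=
  ∀ x y : X, ∃ c : ℝ → X, c 0 = x ∧ c (dist x y) = y ∧ IsGeodesicOn c 0 (dist x y)

open Set Metric

private lemma growth_aux (m : ℕ) : (2*(m:ℝ)+7)^2 < 50 * 2^m := by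
  induction m with
  | zero => norm_num
  | succ m ih =>
    have h2 : (0:ℝ) ≤ (m:ℝ) := Nat.cast_nonneg m
    have hps : (2:ℝ)^(m+1) = 2*2^m := by rw [pow_succ]; ring
    push_cast
    rw [hps]
    nlinarith [ih, h2, sq_nonneg ((m:ℝ))]

private lemma logLemma {X : Type*} [MetricSpace X] {D : ℝ} (hD : 0 ≤ D)
    (η : X → X → ℝ → X)
    (hcont : ∀ x y : X, ContinuousOn (η x y) (Set.Icc 0 1))
    (hends : ∀ x y : X, η x y 0 = x ∧ η x y 1 = y)
    (h1 : ∀ x y : X, dist x y ≤ 1 → Metric.diam (η x y '' Set.Icc 0 1) ≤ D)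
    (h3 : ∀ x y z : X, ∀ p ∈ η x y '' Set.Icc (0:ℝ) 1,
      Metric.infDist p
        ((η x z '' Set.Icc (0:ℝ) 1) ∪ (η z y '' Set.Icc (0:ℝ) 1)) ≤ D) :
    ∀ (n : ℕ) (c : ℝ → X) (α β : ℝ), α ≤ β → IsGeodesicOn c α β → β - α ≤ 2 ^ n →
      ∀ p ∈ η (c α) (c β) '' Set.Icc (0:ℝ) 1,
        Metric.infDist p (c '' Set.Icc α β) ≤ D * (n + 1) := by
  intro n
  induction n with
  | zero =>
    intro c α β hab hg hlen p hp
    have hmem : c α ∈ η (c α) (c β) '' Set.Icc (0:ℝ) 1 :=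
      ⟨0, Set.left_mem_Icc.2 zero_le_one, (hends _ _).1⟩
    have hbd : Bornology.IsBounded (η (c α) (c β) '' Set.Icc (0:ℝ) 1) :=
      (isCompact_Icc.image_of_continuousOn (hcont _ _)).isBounded
    have hd1 : dist (c α) (c β) ≤ 1 := by
      rw [hg α ⟨le_rfl, hab⟩ β ⟨hab, le_rfl⟩, abs_sub_comm,
        abs_of_nonneg (by linarith : (0:ℝ) ≤ β - α)]
      simpa using hlen
    have hdp : dist p (c α) ≤ D :=
      le_trans (Metric.dist_le_diam_of_mem hbd hp hmem) (h1 _ _ hd1)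
    have hin : c α ∈ c '' Set.Icc α β := ⟨α, Set.left_mem_Icc.2 hab, rfl⟩
    have hfin : Metric.infDist p (c '' Set.Icc α β) ≤ D :=
      le_trans (Metric.infDist_le_dist_of_mem hin) hdp
    simpa using hfin
  | succ n ih =>
    intro c α β hab hg hlen p hp
    set γ := (α + β)/2 with hγdef
    have hαγ : α ≤ γ := by rw [hγdef]; linarith
    have hγβ : γ ≤ β := by rw [hγdef]; linarith
    have hlen1 : γ - α ≤ 2 ^ n := by
      have h2 : (2:ℝ)^(n+1) = 2^n + 2^n := by rw [pow_succ]; ring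
      rw [hγdef]; rw [h2] at hlen; linarith
    have hlen2 : β - γ ≤ 2 ^ n := by
      have h2 : (2:ℝ)^(n+1) = 2^n + 2^n := by rw [pow_succ]; ring
      rw [hγdef]; rw [h2] at hlen; linarith
    have hgl : IsGeodesicOn c α γ := fun s hs t ht =>
      hg s ⟨hs.1, hs.2.trans hγβ⟩ t ⟨ht.1, ht.2.trans hγβ⟩
    have hgr : IsGeodesicOn c γ β := fun s hs t ht =>
      hg s ⟨hαγ.trans hs.1, hs.2⟩ t ⟨hαγ.trans ht.1, ht.2⟩
    have hUc : IsCompact ((η (c α) (c γ) '' Set.Icc (0:ℝ) 1) ∪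
        (η (c γ) (c β) '' Set.Icc (0:ℝ) 1)) :=
      (isCompact_Icc.image_of_continuousOn (hcont _ _)).union
        (isCompact_Icc.image_of_continuousOn (hcont _ _))
    have hUne : ((η (c α) (c γ) '' Set.Icc (0:ℝ) 1) ∪
        (η (c γ) (c β) '' Set.Icc (0:ℝ) 1)).Nonempty :=
      ⟨η (c α) (c γ) 0, Set.mem_union_left _ ⟨0, Set.left_mem_Icc.2 zero_le_one, rfl⟩⟩
    obtain ⟨q, hqU, hq_eq⟩ := hUc.exists_infDist_eq_dist hUne p
    have hdpq : dist p q ≤ D := by rw [← hq_eq]; exact h3 _ _ _ p hp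
    rcases hqU with hA | hB
    · have hIH := ih c α γ hαγ hgl hlen1 q hA
      have hsub2 : c '' Set.Icc α γ ⊆ c '' Set.Icc α β :=
        Set.image_mono (Set.Icc_subset_Icc le_rfl hγβ)
      have hne2 : (c '' Set.Icc α γ).Nonempty := ⟨c α, α, Set.left_mem_Icc.2 hαγ, rfl⟩
      have : Metric.infDist p (c '' Set.Icc α β) ≤ D * (n+1) + D := by
        calc Metric.infDist p (c '' Set.Icc α β) ≤ Metric.infDist p (c '' Set.Icc α γ) :=
              Metric.infDist_le_infDist_of_subset hsub2 hne2
          _ ≤ Metric.infDist q (c '' Set.Icc α γ) + dist p q :=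
              Metric.infDist_le_infDist_add_dist
          _ ≤ D * (n+1) + D := add_le_add hIH hdpq
      calc Metric.infDist p (c '' Set.Icc α β) ≤ D * (n+1) + D := this
        _ = D * ((n:ℝ) + 1 + 1) := by ring
        _ = D * (((n:ℕ)+1 : ℕ) + 1) := by push_cast; ring
    · have hIH := ih c γ β hγβ hgr hlen2 q hB
      have hsub2 : c '' Set.Icc γ β ⊆ c '' Set.Icc α β :=
        Set.image_mono (Set.Icc_subset_Icc hαγ le_rfl)
      have hne2 : (c '' Set.Icc γ β).Nonempty := ⟨c γ, γ, Set.left_mem_Icc.2 hγβ, rfl⟩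
      have : Metric.infDist p (c '' Set.Icc α β) ≤ D * (n+1) + D := by
        calc Metric.infDist p (c '' Set.Icc α β) ≤ Metric.infDist p (c '' Set.Icc γ β) :=
              Metric.infDist_le_infDist_of_subset hsub2 hne2
          _ ≤ Metric.infDist q (c '' Set.Icc γ β) + dist p q :=
              Metric.infDist_le_infDist_add_dist
          _ ≤ D * (n+1) + D := add_le_add hIH hdpq
      calc Metric.infDist p (c '' Set.Icc α β) ≤ D * (n+1) + D := this
        _ = D * ((n:ℝ) + 1 + 1) := by ring
        _ = D * (((n:ℕ)+1 : ℕ) + 1) := by push_cast; ring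

set_option maxHeartbeats 2000000 in
/-- If a geodesic metric space admits a family of paths `η(x,y)` satisfying
the three conditions of Proposition 3.5 with constant `D > 0`, then there is `κ₁ > 0`
depending only on `D` such that every path `η(x,y)` is contained in the `κ₁`-neighborhood
of any geodesic from `x` to `y`. -/
theorem eta_close_to_geodesic.{u} :
    ∀ D : ℝ, 0 < D → ∃ κ₁ : ℝ, 0 < κ₁ ∧
      ∀ (X : Type u) [MetricSpace X], GeodesicSpace X →
      ∀ η : X → X → ℝ → X,
        (∀ x y : X, ContinuousOn (η x y) (Set.Icc 0 1)) →
        (∀ x y : X, η x y 0 = x ∧ η x y 1 = y) →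
        -- (1) short distance implies bounded diameter
        (∀ x y : X, dist x y ≤ 1 → Metric.diam (η x y '' Set.Icc 0 1) ≤ D) →
        -- (2) stability under restriction
        (∀ x y : X, ∀ s t : ℝ, 0 ≤ s → s ≤ t → t ≤ 1 →
          Metric.hausdorffDist (η x y '' Set.Icc s t)
            (η (η x y s) (η x y t) '' Set.Icc (0:ℝ) 1) ≤ D) →
        -- (3) thinness of η-triangles
        (∀ x y z : X, ∀ p ∈ η x y '' Set.Icc (0:ℝ) 1,
          Metric.infDist p
            ((η x z '' Set.Icc (0:ℝ) 1) ∪ (η z y '' Set.Icc (0:ℝ) 1)) ≤ D) →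
        ∀ x y : X, ∀ c : ℝ → X,
          c 0 = x → c (dist x y) = y → IsGeodesicOn c 0 (dist x y) →
          ∀ p ∈ η x y '' Set.Icc 0 1,
            Metric.infDist p (c '' Set.Icc 0 (dist x y)) ≤ κ₁ := by
  intro D hD
  refine ⟨450*D^2 + 3, by positivity, ?_⟩
  intro X _inst _hgeo η hcont hends h1 _h2 h3 x y c hc0 hcd hgeod p hp
  obtain ⟨d, hdd⟩ : ∃ d, dist x y = d := ⟨_, rfl⟩
  rw [hdd] at hcd hgeod ⊢
  have hd0 : (0:ℝ) ≤ d := hdd ▸ dist_nonneg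
  have hcC : ContinuousOn c (Set.Icc 0 d) := by
    have hL : LipschitzOnWith 1 c (Set.Icc 0 d) := by
      rw [lipschitzOnWith_iff_dist_le_mul]
      intro s hs t ht
      rw [hgeod s hs t ht, Real.dist_eq]
      simp
    exact hL.continuousOn
  have hCcomp : IsCompact (c '' Set.Icc 0 d) := isCompact_Icc.image_of_continuousOn hcC
  have hCne : (c '' Set.Icc 0 d).Nonempty := ⟨c 0, 0, Set.left_mem_Icc.2 hd0, rfl⟩
  obtain ⟨r, hrdef⟩ : ∃ r, Metric.infDist p (c '' Set.Icc 0 d) = r := ⟨_, rfl⟩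
  rw [hrdef]
  rcases le_or_gt r 2 with hr2 | hr2
  · nlinarith
  have hr0 : (0:ℝ) < r := by linarith
  obtain ⟨w₀, hw₀C, hw₀⟩ := hCcomp.exists_infDist_eq_dist hCne p
  obtain ⟨s₀, hs₀, rfl⟩ := hw₀C
  obtain ⟨hs₀0, hs₀d⟩ := hs₀
  have hrval : r = dist p (c s₀) := by rw [← hrdef]; exact hw₀
  have hp' : p ∈ η (c 0) (c d) '' Set.Icc (0:ℝ) 1 := by rw [hc0, hcd]; exact hp
  -- cutting helper
  have hcut : ∀ (a b z q : X), q ∈ η a b '' Set.Icc (0:ℝ) 1 →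
      ∃ q', (q' ∈ η a z '' Set.Icc (0:ℝ) 1 ∨ q' ∈ η z b '' Set.Icc (0:ℝ) 1) ∧
        dist q q' ≤ D := by
    intro a b z q hq
    have hUc : IsCompact ((η a z '' Set.Icc (0:ℝ) 1) ∪ (η z b '' Set.Icc (0:ℝ) 1)) :=
      (isCompact_Icc.image_of_continuousOn (hcont a z)).union
        (isCompact_Icc.image_of_continuousOn (hcont z b))
    have hUne : ((η a z '' Set.Icc (0:ℝ) 1) ∪ (η z b '' Set.Icc (0:ℝ) 1)).Nonempty :=
      ⟨η a z 0, Set.mem_union_left _ ⟨0, Set.left_mem_Icc.2 zero_le_one, rfl⟩⟩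
    obtain ⟨q', hq'U, hq'⟩ := hUc.exists_infDist_eq_dist hUne q
    exact ⟨q', hq'U, by rw [← hq']; exact h3 a b z q hq⟩
  -- the final computation from a stopped chase
  have final : ∀ (j : ℕ) (q : X) (α β : ℝ), 0 ≤ α → α ≤ β → β ≤ d →
      β - α ≤ r * 2^(j+1) → dist p q ≤ ((j:ℝ)+5)*D →
      q ∈ η (c α) (c β) '' Set.Icc (0:ℝ) 1 →
      (∀ s, α ≤ s → s ≤ β → r * 2^j - r ≤ |s - s₀|) →
      r ≤ 450*D^2 + 3 := by
    intro j q α β h0α hαβ hβd hlen hdpq hqmem hmin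
    obtain ⟨nr, hnrdef⟩ : ∃ nr : ℕ, nr = Nat.clog 2 ⌈r⌉₊ := ⟨_, rfl⟩
    have hrle : r ≤ 2^nr := by
      have h1' : ((⌈r⌉₊ : ℕ) : ℝ) ≤ (2:ℝ)^nr := by
        rw [hnrdef]
        exact_mod_cast Nat.le_pow_clog (by norm_num) _
      exact (Nat.le_ceil r).trans h1'
    have hnrle : (2:ℝ)^nr ≤ 3*r := by
      have hceil2 : 2 ≤ ⌈r⌉₊ := by
        have h1r : (1:ℝ) < r := by linarith
        exact_mod_cast Nat.lt_ceil.2 (by exact_mod_cast h1r)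
      have hnrpos : 0 < nr := hnrdef ▸ Nat.clog_pos (by norm_num) hceil2
      have hlt : (2:ℕ)^(nr-1) < ⌈r⌉₊ := by
        rw [hnrdef]; exact Nat.pow_pred_clog_lt_self (by norm_num) hceil2
      have hlt' : (2:ℝ)^(nr-1) < r + 1 := by
        have h1' : ((2:ℕ)^(nr-1) : ℝ) < (⌈r⌉₊ : ℝ) := by exact_mod_cast hlt
        have h2' : (⌈r⌉₊ : ℝ) < r + 1 := Nat.ceil_lt_add_one hr0.le
        push_cast at h1'
        linarith
      have hsp : nr - 1 + 1 = nr := Nat.succ_pred_eq_of_pos hnrpos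
      have h2eq : (2:ℝ)^nr = 2 * 2^(nr-1) := by
        conv_lhs => rw [← hsp]
        rw [pow_succ]; ring
      rw [h2eq]; nlinarith
    obtain ⟨n, hndef⟩ : ∃ n : ℕ, n = nr + (j + 1) := ⟨_, rfl⟩
    have hβα : β - α ≤ 2^n := by
      have hps : (2:ℝ)^n = 2^nr * 2^(j+1) := by rw [hndef, pow_add]
      have h2j : (0:ℝ) < 2^(j+1) := by positivity
      rw [hps]
      nlinarith
    have hgres : IsGeodesicOn c α β := fun s hs t ht =>
      hgeod s ⟨h0α.trans hs.1, hs.2.trans hβd⟩ t ⟨h0α.trans ht.1, ht.2.trans hβd⟩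
    have hlog := logLemma hD.le η hcont hends h1 h3 n c α β hαβ hgres hβα q hqmem
    have hScomp : IsCompact (c '' Set.Icc α β) :=
      isCompact_Icc.image_of_continuousOn (hcC.mono (Set.Icc_subset_Icc h0α hβd))
    have hSne : (c '' Set.Icc α β).Nonempty := ⟨c α, α, Set.left_mem_Icc.2 hαβ, rfl⟩
    obtain ⟨w, hwS, hwq⟩ := hScomp.exists_infDist_eq_dist hSne q
    have hqw : dist q w ≤ D*(n+1) := by rw [← hwq]; exact hlog
    obtain ⟨s, hsmem, rfl⟩ := hwS
    have hsIcc : s ∈ Set.Icc 0 d := ⟨h0α.trans hsmem.1, hsmem.2.trans hβd⟩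
    have hI : r ≤ ((j:ℝ)+5)*D + D*(n+1) := by
      have hrs : r ≤ dist p (c s) := by
        rw [← hrdef]; exact Metric.infDist_le_dist_of_mem ⟨s, hsIcc, rfl⟩
      calc r ≤ dist p (c s) := hrs
        _ ≤ dist p q + dist q (c s) := dist_triangle _ _ _
        _ ≤ ((j:ℝ)+5)*D + D*(n+1) := add_le_add hdpq hqw
    have habs : |s - s₀| = dist (c s) (c s₀) := (hgeod s hsIcc s₀ ⟨hs₀0, hs₀d⟩).symm
    have hII : r * 2^j - r ≤ ((j:ℝ)+5)*D + D*(n+1) + r := by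
      have h5 : |s - s₀| ≤ dist p (c s) + r := by
        rw [habs, hrval]
        calc dist (c s) (c s₀) ≤ dist (c s) p + dist p (c s₀) := dist_triangle _ _ _
          _ = dist p (c s) + dist p (c s₀) := by rw [dist_comm (c s) p]
      have h6 := hmin s hsmem.1 hsmem.2
      have h7 : dist p (c s) ≤ ((j:ℝ)+5)*D + D*(n+1) :=
        le_trans (dist_triangle p q (c s)) (add_le_add hdpq hqw)
      linarith
    obtain ⟨T, hTdef⟩ : ∃ T : ℝ, T = ((j:ℝ)+5)*D + D*(n+1) := ⟨_, rfl⟩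
    rw [← hTdef] at hI hII
    have hrT : r ≤ T := hI
    have hj3T : r * 2^j ≤ 3*T := by linarith
    have hmT : (2:ℝ)^(j + nr) ≤ 9*T := by
      have hps : (2:ℝ)^(j+nr) = 2^j * 2^nr := pow_add 2 j nr
      have h2j : (0:ℝ) < 2^j := by positivity
      rw [hps]
      calc (2:ℝ)^j * 2^nr ≤ 2^j * (3*r) := mul_le_mul_of_nonneg_left hnrle h2j.le
        _ = 3*(r*2^j) := by ring
        _ ≤ 9*T := by linarith
    obtain ⟨m, hmdef⟩ : ∃ m : ℕ, m = j + nr := ⟨_, rfl⟩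
    rw [← hmdef] at hmT
    have hTle : T ≤ D*(2*(m:ℝ)+7) := by
      have hnn : (0:ℝ) ≤ D * (nr:ℝ) := mul_nonneg hD.le (Nat.cast_nonneg nr)
      rw [hTdef, hndef, hmdef]
      push_cast
      ring_nf
      ring_nf at hnn
      linarith
    have hgrow := growth_aux m
    have h2m : (2:ℝ)^m ≤ 9*(D*(2*(m:ℝ)+7)) := by linarith [hmT, hTle]
    have hmpos : (0:ℝ) < 2*(m:ℝ)+7 := by positivity
    have hmD : 2*(m:ℝ)+7 < 450*D := by nlinarith [hgrow, h2m, hmpos]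
    have hrfin : r ≤ D*(2*(m:ℝ)+7) := hrT.trans hTle
    have hDm : D*(2*(m:ℝ)+7) < D*(450*D) := mul_lt_mul_of_pos_left hmD hD
    have hsq : D*(450*D) = 450*D^2 := by ring
    linarith
  -- the left chase
  have left : ∀ (k j : ℕ) (q : X), 0 ≤ s₀ - r*2^j → s₀ - r*2^j ≤ r*k →
      dist p q ≤ ((j:ℝ)+3)*D → q ∈ η (c 0) (c (s₀ - r*2^j)) '' Set.Icc (0:ℝ) 1 →
      r ≤ 450*D^2 + 3 := by
    intro k
    induction k with
    | zero =>
      intro j q h0 hk hdq hqm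
      have hk0 : s₀ - r*2^j ≤ 0 := by simpa using hk
      have h2j1 : (0:ℝ) ≤ r*2^(j+1) := by positivity
      have h2j : (0:ℝ) ≤ r*2^j := by positivity
      refine final j q 0 (s₀ - r*2^j) le_rfl h0 (by linarith) (by linarith)
        (by nlinarith [hD.le]) hqm ?_
      intro s hs1 hs2
      have hss : s ≤ s₀ := by linarith
      rw [abs_sub_comm, abs_of_nonneg (by linarith : (0:ℝ) ≤ s₀ - s)]
      linarith
    | succ k ihk =>
      intro j q h0 hk hdq hqm
      have h2j : (0:ℝ) ≤ r*2^j := by positivity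
      by_cases hnext : 0 ≤ s₀ - r*2^(j+1)
      · obtain ⟨q', hq'm, hdqq'⟩ := hcut (c 0) (c (s₀ - r*2^j)) (c (s₀ - r*2^(j+1))) q hqm
        have hdpq' : dist p q' ≤ ((j:ℝ)+4)*D := by
          calc dist p q' ≤ dist p q + dist q q' := dist_triangle _ _ _
            _ ≤ ((j:ℝ)+3)*D + D := add_le_add hdq hdqq'
            _ = ((j:ℝ)+4)*D := by ring
        rcases hq'm with h | h
        · refine ihk (j+1) q' hnext ?_ ?_ h
          · have h1' : (1:ℝ) ≤ 2^j := one_le_pow₀ (by norm_num)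
            have h2' : r * 1 ≤ r * 2^j := mul_le_mul_of_nonneg_left h1' hr0.le
            have hps : (2:ℝ)^(j+1) = 2^j + 2^j := by rw [pow_succ]; ring
            push_cast at hk
            rw [hps]
            linarith
          · push_cast; linarith
        · have hps : (2:ℝ)^(j+1) = 2^j + 2^j := by rw [pow_succ]; ring
          refine final j q' (s₀ - r*2^(j+1)) (s₀ - r*2^j) hnext
            (by nlinarith) (by linarith) (by nlinarith) (by nlinarith [hD.le]) h ?_
          intro s hs1 hs2
          have hss : s ≤ s₀ := by linarith
          rw [abs_sub_comm, abs_of_nonneg (by linarith : (0:ℝ) ≤ s₀ - s)]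
          linarith
      · -- s₀ - r*2^(j+1) < 0 : stop with piece [0, s₀ - r*2^j]
        push_neg at hnext
        have hps : (2:ℝ)^(j+1) = 2^j + 2^j := by rw [pow_succ]; ring
        refine final j q 0 (s₀ - r*2^j) le_rfl h0 (by linarith) (by nlinarith)
          (by nlinarith [hD.le]) hqm ?_
        intro s hs1 hs2
        have hss : s ≤ s₀ := by linarith
        rw [abs_sub_comm, abs_of_nonneg (by linarith : (0:ℝ) ≤ s₀ - s)]
        linarith
  -- the right chase
  have right : ∀ (k j : ℕ) (q : X), s₀ + r*2^j ≤ d → d - (s₀ + r*2^j) ≤ r*k →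
      dist p q ≤ ((j:ℝ)+4)*D → q ∈ η (c (s₀ + r*2^j)) (c d) '' Set.Icc (0:ℝ) 1 →
      r ≤ 450*D^2 + 3 := by
    intro k
    induction k with
    | zero =>
      intro j q h0 hk hdq hqm
      have hk0 : d - (s₀ + r*2^j) ≤ 0 := by simpa using hk
      have h2j1 : (0:ℝ) ≤ r*2^(j+1) := by positivity
      have h2j : (0:ℝ) ≤ r*2^j := by positivity
      refine final j q (s₀ + r*2^j) d (by linarith) (by linarith) le_rfl (by linarith)
        (by nlinarith [hD.le]) hqm ?_
      intro s hs1 hs2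
      rw [abs_of_nonneg (by linarith : (0:ℝ) ≤ s - s₀)]
      linarith
    | succ k ihk =>
      intro j q h0 hk hdq hqm
      have h2j : (0:ℝ) ≤ r*2^j := by positivity
      have hps : (2:ℝ)^(j+1) = 2^j + 2^j := by rw [pow_succ]; ring
      by_cases hnext : s₀ + r*2^(j+1) ≤ d
      · obtain ⟨q', hq'm, hdqq'⟩ := hcut (c (s₀ + r*2^j)) (c d) (c (s₀ + r*2^(j+1))) q hqm
        have hdpq' : dist p q' ≤ ((j:ℝ)+5)*D := by
          calc dist p q' ≤ dist p q + dist q q' := dist_triangle _ _ _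
            _ ≤ ((j:ℝ)+4)*D + D := add_le_add hdq hdqq'
            _ = ((j:ℝ)+5)*D := by ring
        rcases hq'm with h | h
        · refine final j q' (s₀ + r*2^j) (s₀ + r*2^(j+1)) (by linarith) (by nlinarith)
            hnext (by nlinarith) hdpq' h ?_
          intro s hs1 hs2
          rw [abs_of_nonneg (by linarith : (0:ℝ) ≤ s - s₀)]
          linarith
        · refine ihk (j+1) q' hnext ?_ ?_ h
          · have h1' : (1:ℝ) ≤ 2^j := one_le_pow₀ (by norm_num)
            have h2' : r * 1 ≤ r * 2^j := mul_le_mul_of_nonneg_left h1' hr0.le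
            push_cast at hk
            rw [hps]
            linarith
          · push_cast; linarith
      · push_neg at hnext
        refine final j q (s₀ + r*2^j) d (by linarith) h0 le_rfl (by nlinarith)
          (by nlinarith [hD.le]) hqm ?_
        intro s hs1 hs2
        rw [abs_of_nonneg (by linarith : (0:ℝ) ≤ s - s₀)]
        linarith
  -- startup
  obtain ⟨k, hkd⟩ : ∃ k : ℕ, d ≤ r * k := by
    obtain ⟨k, hk⟩ := exists_nat_ge (d / r)
    refine ⟨k, ?_⟩
    rw [div_le_iff₀ hr0] at hk
    linarith [hk]
  have habs0 : ∀ s : ℝ, r * 2^0 - r ≤ |s - s₀| := fun s => by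
    simpa using abs_nonneg (s - s₀)
  rcases le_or_gt 0 (s₀ - r) with hL0 | hL0
  · obtain ⟨q₁, hq₁m, hdq₁⟩ := hcut (c 0) (c d) (c (s₀ - r)) p hp'
    have hdq₁' : dist p q₁ ≤ D := hdq₁
    rcases hq₁m with h | h
    · -- left chase with j = 0
      have hrw : s₀ - r = s₀ - r*2^0 := by norm_num
      rw [hrw] at hL0 h
      exact left k 0 q₁ hL0 (by norm_num; linarith) (by norm_num; nlinarith [hD.le]) h
    · rcases le_or_gt (s₀ + r) d with hR0 | hR0
      · obtain ⟨q₂, hq₂m, hdq₂⟩ := hcut (c (s₀ - r)) (c d) (c (s₀ + r)) q₁ h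
        have hdpq₂ : dist p q₂ ≤ 2*D := by
          calc dist p q₂ ≤ dist p q₁ + dist q₁ q₂ := dist_triangle _ _ _
            _ ≤ D + D := add_le_add hdq₁' hdq₂
            _ = 2*D := by ring
        rcases hq₂m with h2 | h2
        · exact final 0 q₂ (s₀ - r) (s₀ + r) hL0 (by linarith) hR0
            (by norm_num; linarith) (by norm_num; nlinarith [hD.le]) h2
            (fun s _ _ => habs0 s)
        · have hrw : s₀ + r = s₀ + r*2^0 := by norm_num
          rw [hrw] at hR0 h2
          exact right k 0 q₂ hR0 (by norm_num; linarith) (by norm_num; nlinarith [hD.le]) h2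
      · exact final 0 q₁ (s₀ - r) d hL0 (by linarith) le_rfl
          (by norm_num; linarith) (by norm_num; nlinarith [hD.le]) h
          (fun s _ _ => habs0 s)
  · rcases le_or_gt (s₀ + r) d with hR0 | hR0
    · obtain ⟨q₁, hq₁m, hdq₁⟩ := hcut (c 0) (c d) (c (s₀ + r)) p hp'
      rcases hq₁m with h | h
      · exact final 0 q₁ 0 (s₀ + r) le_rfl (by linarith) hR0
          (by norm_num; linarith) (by norm_num; nlinarith [hD.le]) h
          (fun s _ _ => habs0 s)
      · have hrw : s₀ + r = s₀ + r*2^0 := by norm_num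
        rw [hrw] at hR0 h
        exact right k 0 q₁ hR0 (by norm_num; linarith) (by norm_num; nlinarith [hD.le]) h
    · exact final 0 p 0 d le_rfl hd0 le_rfl (by norm_num; linarith)
        (by norm_num; nlinarith [hD.le, dist_self p]) hp'
        (fun s _ _ => habs0 s)
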